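/- Under the axioms of the previous statement, setting g(x,y) = f(x,y)/(λ - u(y,y)), the function x ↦ g(x,y) satisfies the resolvent equation P g(·,y)(x) = λ g(x,y) - δ_x(y) for all x,y ∈ T. -/

import Mathlib

open SimpleGraph Function

/-- Any vertex on a walk to `y` is within `W.length` of `y`. -/
lemma aux_mem_dist_le {V : Type*} [DecidableEq V] {G : SimpleGraph V} {a y w : V}
    (W : G.Walk a y) (hw : w ∈ W.support) : G.dist w y ≤ W.length := by
  have h1 := G.dist_le (W.dropUntil w hw)
  have h2 := W.length_dropUntil_le hw
  omega

lemma aux_mem_dist_lt {V : Type*} [DecidableEq V] {G : SimpleGraph V} {a y w : V}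
    (W : G.Walk a y) (hw : w ∈ W.support) (hwa : w ≠ a) : G.dist w y < W.length := by
  have h1 := G.dist_le (W.dropUntil w hw)
  have hspec := congr_arg SimpleGraph.Walk.length (W.take_spec hw)
  rw [SimpleGraph.Walk.length_append] at hspec
  have : (W.takeUntil w hw).length ≠ 0 := fun h =>
    hwa (SimpleGraph.Walk.eq_of_length_eq_zero h).symm
  omega

/-- In a tree, adjacent vertices have different distances to any vertex. -/
lemma aux_dist_ne {V : Type*} [DecidableEq V] {G : SimpleGraph V} (hT : G.IsTree) {x w y : V}
    (hxw : G.Adj x w) : G.dist x y ≠ G.dist w y := by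
  intro he
  obtain ⟨Px, hPx⟩ := hT.isConnected.exists_walk_length_eq_dist x y
  obtain ⟨Pw, hPw⟩ := hT.isConnected.exists_walk_length_eq_dist w y
  have hPxp : Px.IsPath := Px.isPath_of_length_eq_dist hPx
  have hPwp : Pw.IsPath := Pw.isPath_of_length_eq_dist hPw
  have hwPx : w ∉ Px.support := by
    intro hmem
    have := aux_mem_dist_lt Px hmem hxw.ne'
    omega
  have hcons : (Px.cons hxw.symm).IsPath := hPxp.cons hwPx
  obtain ⟨Q, hQ, hQu⟩ := hT.existsUnique_path w y
  have h1 : Px.cons hxw.symm = Q := hQu _ hcons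
  have h2 : Pw = Q := hQu _ hPwp
  have := congr_arg SimpleGraph.Walk.length (h1.trans h2.symm)
  simp only [SimpleGraph.Walk.length_cons] at this
  omega

/-- In a tree, for `x ≠ y` there is a unique neighbour of `x` strictly closer to `y`. -/
lemma aux_exists_closer {V : Type*} [DecidableEq V] {G : SimpleGraph V} (hT : G.IsTree) {x y : V}
    (hxy : x ≠ y) : ∃ z, G.Adj x z ∧ G.dist z y + 1 = G.dist x y ∧
      ∀ w, G.Adj x w → w ≠ z → G.dist x y + 1 = G.dist w y := by
  have hd : G.dist x y ≠ 0 := by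
    have := hT.isConnected.pos_dist_of_ne hxy; omega
  obtain ⟨P, hP⟩ := hT.isConnected.exists_walk_length_eq_dist x y
  cases P with
  | nil => exact absurd rfl hxy
  | cons h W =>
    rename_i z
    simp only [SimpleGraph.Walk.length_cons] at hP
    have hzle : G.dist z y ≤ W.length := G.dist_le W
    have hxz : G.dist x y ≤ G.dist z y + 1 := by
      have := hT.isConnected.dist_triangle (u := x) (v := z) (w := y)
      rw [SimpleGraph.dist_eq_one_iff_adj.mpr h] at this
      omega
    have hzy : G.dist z y + 1 = G.dist x y := by omega
    refine ⟨z, h, hzy, fun w hw hwz => ?_⟩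
    have hle1 : G.dist w y ≤ G.dist x y + 1 := by
      have := hT.isConnected.dist_triangle (u := w) (v := x) (w := y)
      rw [SimpleGraph.dist_comm (u := w) (v := x),
        SimpleGraph.dist_eq_one_iff_adj.mpr hw] at this
      omega
    have hle2 : G.dist x y ≤ G.dist w y + 1 := by
      have := hT.isConnected.dist_triangle (u := x) (v := w) (w := y)
      rw [SimpleGraph.dist_eq_one_iff_adj.mpr hw] at this
      omega
    have hne := aux_dist_ne hT hw (y := y)
    have hnotclose : ¬ (G.dist w y + 1 = G.dist x y) := by
      intro hclose
      obtain ⟨Qz, hQz⟩ := hT.isConnected.exists_walk_length_eq_dist z y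
      obtain ⟨Qw, hQw⟩ := hT.isConnected.exists_walk_length_eq_dist w y
      have hxQz : x ∉ Qz.support := by
        intro hm
        have := aux_mem_dist_le Qz hm; omega
      have hxQw : x ∉ Qw.support := by
        intro hm
        have := aux_mem_dist_le Qw hm; omega
      have hc1 : (Qz.cons h).IsPath := (Qz.isPath_of_length_eq_dist hQz).cons hxQz
      have hc2 : (Qw.cons hw).IsPath := (Qw.isPath_of_length_eq_dist hQw).cons hxQw
      obtain ⟨Q, hQ, hQu⟩ := hT.existsUnique_path x y
      have h1 : Qz.cons h = Q := hQu _ hc1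
      have h2 : Qw.cons hw = Q := hQu _ hc2
      have hsup := congr_arg SimpleGraph.Walk.support (h1.trans h2.symm)
      rw [SimpleGraph.Walk.support_cons, SimpleGraph.Walk.support_cons,
        Qz.support_eq_cons, Qw.support_eq_cons] at hsup
      simp only [List.cons.injEq] at hsup
      exact hwz hsup.2.1.symm
    omega

/-- Under the λ-weight axioms, setting `g(x,y) = F(x,y)/(λ - u(y,y))` (with `F` the
multiplicative extension of the weights along geodesics), the function `x ↦ g(x,y)`
satisfies the resolvent equation `Pg(·,y)(x) = λ g(x,y) - δ_x(y)` for all `x, y`. -/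
theorem stmt11 {V : Type*} [Countable V] [DecidableEq V] (G : SimpleGraph V) (hT : G.IsTree)
    (p : V → V → ℝ)
    (hpadj : ∀ x y, 0 < p x y ↔ G.Adj x y)
    (hp0 : ∀ x y, ¬ G.Adj x y → p x y = 0)
    (hstoch : ∀ x, HasSum (fun y => p x y) 1)
    (lam : ℂ) (f : V → V → ℂ) (u : V → ℂ)
    (hu : ∀ x, HasSum (fun v => (p x v : ℂ) * f v x) (u x))
    (hne1 : ∀ x y, G.Adj x y → f x y * f y x ≠ 1)
    (hnela : ∀ x, u x ≠ lam)
    (hla : ∀ x y, G.Adj x y →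
      lam * f x y = (p x y : ℂ) + (u x - (p x y : ℂ) * f y x) * f x y)
    (F : V → V → ℂ)
    (hFdiag : ∀ x, F x x = 1)
    (hFmul : ∀ x y z : V, x ≠ y → G.Adj x z → G.dist z y + 1 = G.dist x y →
      F x y = f x z * F z y)
    (g : V → V → ℂ)
    (hg : ∀ x y, g x y = F x y / (lam - u y))
    (x y : V) :
    HasSum (fun v => (p x v : ℂ) * g v y)
      (lam * g x y - (if x = y then 1 else 0)) := by
  have hc : lam - u y ≠ 0 := sub_ne_zero.mpr (Ne.symm (hnela y))
  suffices h : HasSum (fun v => (p x v : ℂ) * F v y)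
      (lam * F x y - (if x = y then 1 else 0) * (lam - u y)) by
    have hd := h.div_const (lam - u y)
    convert hd using 1
    · rfl
    · funext v; rw [hg]; ring
    · rw [hg]; field_simp
  by_cases hxy : x = y
  · subst hxy
    have hval : lam * F x x - (if x = x then 1 else 0) * (lam - u x) = u x := by
      rw [hFdiag, if_pos rfl]; ring
    rw [hval]
    have heqfun : (fun v => (p x v : ℂ) * F v x) = (fun v => (p x v : ℂ) * f v x) := by
      funext v
      by_cases hadj : G.Adj x v
      · have hFv : F v x = f v x := by
          rw [hFmul v x x hadj.ne' hadj.symm (by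
            rw [SimpleGraph.dist_self, SimpleGraph.dist_eq_one_iff_adj.mpr hadj.symm]),
            hFdiag, mul_one]
        rw [hFv]
      · rw [hp0 x v hadj]; simp
    rw [heqfun]
    exact hu x
  · rw [if_neg hxy, zero_mul, sub_zero]
    obtain ⟨z, hxz, hzy, hother⟩ := aux_exists_closer hT hxy
    have hF : F x y = f x z * F z y := hFmul x y z hxy hxz hzy
    have hsum : HasSum (fun v => ((p x v : ℂ) * f v x) * F x y) (u x * F x y) :=
      (hu x).mul_right _
    have hupd := hsum.update z ((p x z : ℂ) * F z y)
    have heq : (Function.update (fun v => ((p x v : ℂ) * f v x) * F x y) z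
        ((p x z : ℂ) * F z y)) = (fun v => (p x v : ℂ) * F v y) := by
      funext v
      by_cases hvz : v = z
      · subst hvz; rw [Function.update_self]
      · rw [Function.update_of_ne hvz]
        by_cases hadj : G.Adj x v
        · have h1 := hother v hadj hvz
          have hvy : v ≠ y := by
            intro hv
            rw [hv, SimpleGraph.dist_self] at h1
            omega
          have : F v y = f v x * F x y := hFmul v y x hvy hadj.symm h1
          rw [this]; ring
        · rw [hp0 x v hadj]; simp
    rw [heq] at hupd
    convert hupd using 1
    · rfl
    have hlaz := hla x z hxz
    calc lam * F x y = (lam * f x z) * F z y := by rw [hF]; ring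
      _ = ((p x z : ℂ) + (u x - (p x z : ℂ) * f z x) * f x z) * F z y := by rw [hlaz]
      _ = (p x z : ℂ) * F z y - ((p x z : ℂ) * f z x) * (f x z * F z y)
            + u x * (f x z * F z y) := by ring
      _ = (p x z : ℂ) * F z y - ((p x z : ℂ) * f z x) * F x y + u x * F x y := by rw [← hF]
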